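/- Let Q be a uniformly random 2n × 2n signed permutation matrix (uniform over the group B(2n) of matrices with exactly one nonzero entry ±1 in each row and column). Then for any 1 ≤ k ≤ 2n and any subsets S₁, S₂, T₁, T₂ ⊆ {1,…,2n} with |S₁| = |S₂| = |T₁| = |T₂| = k, the expectation E[det(Q|_{S₁,T₁}) · det(Q|_{S₂,T₂})] equals C(2n, k)⁻¹ if S₁ = S₂ and T₁ = T₂, and equals 0 otherwise. -/

import Mathlib

open Matrix

section Aux
open Finset


variable {α : Type*} [Fintype α] [DecidableEq α]

lemma image_eq_iff (σ : Equiv.Perm α) (S T : Finset α) (h : S.card = T.card) :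
    T.image σ = S ↔ ∀ x, x ∈ T ↔ σ x ∈ S := by
  constructor
  · intro him x
    constructor
    · intro hx; rw [← him]; exact Finset.mem_image_of_mem σ hx
    · intro hx
      rw [← him] at hx
      obtain ⟨t, ht, hts⟩ := Finset.mem_image.1 hx
      rwa [← σ.injective hts]
  · intro hiff
    apply Finset.eq_of_subset_of_card_le
    · intro y hy
      obtain ⟨t, ht, hts⟩ := Finset.mem_image.1 hy
      rw [← hts]; exact (hiff t).1 ht
    · rw [Finset.card_image_of_injective _ σ.injective, h]

lemma subtypeCongr_apply_pos {p q : α → Prop} [DecidablePred p] [DecidablePred q]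
    (e : {x // p x} ≃ {x // q x}) (f : {x // ¬ p x} ≃ {x // ¬ q x}) (x : α) (h : p x) :
    Equiv.subtypeCongr e f x = ↑(e ⟨x, h⟩) := by
  simp [Equiv.subtypeCongr, h]

lemma subtypeCongr_apply_neg {p q : α → Prop} [DecidablePred p] [DecidablePred q]
    (e : {x // p x} ≃ {x // q x}) (f : {x // ¬ p x} ≃ {x // ¬ q x}) (x : α) (h : ¬ p x) :
    Equiv.subtypeCongr e f x = ↑(f ⟨x, h⟩) := by
  simp [Equiv.subtypeCongr, h]

/-- Permutations mapping `T` onto `S` correspond to pairs of bijections. -/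
def permImageEquiv (S T : Finset α) :
    {σ : Equiv.Perm α // ∀ x, x ∈ T ↔ σ x ∈ S} ≃
      (({x // x ∈ T} ≃ {x // x ∈ S}) × ({x // ¬ x ∈ T} ≃ {x // ¬ x ∈ S})) where
  toFun σp := ⟨Equiv.subtypeEquiv σp.1 σp.2, Equiv.subtypeEquiv σp.1 fun x => not_congr (σp.2 x)⟩
  invFun ef := ⟨Equiv.subtypeCongr ef.1 ef.2, by
    intro x
    by_cases h : x ∈ T
    · rw [subtypeCongr_apply_pos ef.1 ef.2 x h]
      simp only [h, true_iff]
      exact (ef.1 ⟨x, h⟩).2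
    · rw [subtypeCongr_apply_neg ef.1 ef.2 x h]
      simp only [h, false_iff]
      exact (ef.2 ⟨x, h⟩).2⟩
  left_inv := by
    rintro ⟨σ, hσ⟩
    ext x
    by_cases h : x ∈ T
    · rw [subtypeCongr_apply_pos]
      · rfl
      · exact h
    · rw [subtypeCongr_apply_neg]
      · rfl
      · exact h
  right_inv := by
    rintro ⟨e, f⟩
    refine Prod.ext ?_ ?_
    · ext x
      simp only [Equiv.subtypeEquiv_apply]
      rw [subtypeCongr_apply_pos e f x x.2]
    · ext x
      simp only [Equiv.subtypeEquiv_apply]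
      rw [subtypeCongr_apply_neg e f x x.2]

lemma card_perm_image (S T : Finset α) (h : S.card = T.card) :
    Fintype.card {σ : Equiv.Perm α // T.image σ = S} =
      T.card.factorial * (Fintype.card α - T.card).factorial := by
  have e1 : {σ : Equiv.Perm α // T.image σ = S} ≃ {σ : Equiv.Perm α // ∀ x, x ∈ T ↔ σ x ∈ S} :=
    Equiv.subtypeEquivRight fun σ => image_eq_iff σ S T h
  rw [Fintype.card_congr (e1.trans (permImageEquiv S T)), Fintype.card_prod]
  have hc : Fintype.card {x // x ∈ T} = Fintype.card {x // x ∈ S} := by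
    simp [Fintype.card_coe, h]
  have hc2 : Fintype.card {x // ¬ x ∈ T} = Fintype.card {x // ¬ x ∈ S} := by
    simp [Fintype.card_subtype_compl, Fintype.card_coe, h]
  rw [Fintype.card_equiv (Fintype.equivOfCardEq hc), Fintype.card_equiv (Fintype.equivOfCardEq hc2)]
  simp [Fintype.card_coe, Fintype.card_subtype_compl]

lemma sum_sign_prod (T₁ T₂ : Finset α) :
    ∑ s : α → Bool, ((∏ t ∈ T₁, (if s t then (1:ℝ) else -1)) *
      ∏ t ∈ T₂, (if s t then (1:ℝ) else -1))
      = if T₁ = T₂ then 2 ^ Fintype.card α else 0 := by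
  have key : ∀ s : α → Bool,
      ((∏ t ∈ T₁, (if s t then (1:ℝ) else -1)) * ∏ t ∈ T₂, (if s t then (1:ℝ) else -1))
      = ∏ t : α, ((if t ∈ T₁ then (if s t then (1:ℝ) else -1) else 1) *
          (if t ∈ T₂ then (if s t then (1:ℝ) else -1) else 1)) := by
    intro s
    rw [Finset.prod_mul_distrib, Fintype.prod_ite_mem, Fintype.prod_ite_mem]
  simp only [key]
  have h2 : (∏ t : α, ∑ b : Bool, ((if t ∈ T₁ then (if b then (1:ℝ) else -1) else 1) *
        (if t ∈ T₂ then (if b then (1:ℝ) else -1) else 1)))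
      = ∑ x ∈ Fintype.piFinset fun _ : α => (Finset.univ : Finset Bool),
      ∏ t : α, ((if t ∈ T₁ then (if x t then (1:ℝ) else -1) else 1) *
        (if t ∈ T₂ then (if x t then (1:ℝ) else -1) else 1)) := by
    rw [Finset.prod_univ_sum]
  rw [← Fintype.piFinset_univ, ← h2]
  have factor : ∀ t : α,
      (∑ b : Bool, ((if t ∈ T₁ then (if b then (1:ℝ) else -1) else 1) *
        (if t ∈ T₂ then (if b then (1:ℝ) else -1) else 1)))
      = if (t ∈ T₁ ↔ t ∈ T₂) then 2 else 0 := by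
    intro t
    rw [Fintype.sum_bool]
    by_cases h1 : t ∈ T₁ <;> by_cases h2 : t ∈ T₂ <;> simp [h1, h2] <;> norm_num
  simp only [factor]
  by_cases hT : T₁ = T₂
  · subst hT
    simp
  · rw [if_neg hT]
    obtain ⟨t, ht⟩ : ∃ t, ¬ (t ∈ T₁ ↔ t ∈ T₂) := by
      by_contra hall
      push_neg at hall
      exact hT (Finset.ext fun t => (hall t))
    exact Finset.prod_eq_zero (Finset.mem_univ t) (by rw [if_neg ht])

lemma detB_zero {N k : ℕ} (σ : Equiv.Perm (Fin N)) (S T : Finset (Fin N))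
    (hS : S.card = k) (hT : T.card = k) (h : T.image σ ≠ S) :
    Matrix.det (Matrix.of fun i j : Fin k =>
      if σ (T.orderIsoOfFin hT j) = S.orderIsoOfFin hS i then (1:ℝ) else 0) = 0 := by
  have hsub : ¬ (T.image σ ⊆ S) := by
    intro hsub
    exact h (Finset.eq_of_subset_of_card_le hsub
      (by rw [hS, Finset.card_image_of_injective _ σ.injective, hT]))
  obtain ⟨y, hy, hyS⟩ := Finset.not_subset.1 hsub
  obtain ⟨t, ht, rfl⟩ := Finset.mem_image.1 hy
  apply Matrix.det_eq_zero_of_column_eq_zero ((T.orderIsoOfFin hT).symm ⟨t, ht⟩)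
  intro i
  simp only [Matrix.of_apply, OrderIso.apply_symm_apply]
  rw [if_neg]
  intro hc
  exact hyS (hc ▸ (S.orderIsoOfFin hS i).2)

lemma detB_sq {N k : ℕ} (σ : Equiv.Perm (Fin N)) (S T : Finset (Fin N))
    (hS : S.card = k) (hT : T.card = k) (h : T.image σ = S) :
    Matrix.det (Matrix.of fun i j : Fin k =>
        if σ (T.orderIsoOfFin hT j) = S.orderIsoOfFin hS i then (1:ℝ) else 0) *
      Matrix.det (Matrix.of fun i j : Fin k =>
        if σ (T.orderIsoOfFin hT j) = S.orderIsoOfFin hS i then (1:ℝ) else 0) = 1 := by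
  have hiff : ∀ x, x ∈ T ↔ σ x ∈ S := (image_eq_iff σ S T (hS.trans hT.symm)).1 h
  set π : Equiv.Perm (Fin k) :=
    ((T.orderIsoOfFin hT).toEquiv.trans (Equiv.subtypeEquiv σ hiff)).trans
      (S.orderIsoOfFin hS).toEquiv.symm with hπ
  have hB : (Matrix.of fun i j : Fin k =>
      if σ (T.orderIsoOfFin hT j) = S.orderIsoOfFin hS i then (1:ℝ) else 0)
      = (π.permMatrix ℝ)ᵀ := by
    ext i j
    simp only [Matrix.of_apply, Matrix.transpose_apply, Equiv.Perm.permMatrix,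
      PEquiv.toMatrix_apply, Equiv.toPEquiv_apply, Option.mem_def, Option.some.injEq]
    congr 1
    simp only [hπ, Equiv.trans_apply, Equiv.subtypeEquiv_apply, RelIso.coe_fn_toEquiv]
    rw [eq_iff_iff, Equiv.symm_apply_eq, Subtype.ext_iff]
    simp
  rw [hB, Matrix.det_transpose, Matrix.det_permutation]
  rcases Int.units_eq_one_or (Equiv.Perm.sign π) with hs | hs <;> rw [hs] <;> norm_num

end Aux

/-- The signed permutation matrix determined by a permutation `σ` and a choice of
signs `s` (entry `(i,j)` is `±1` if `i = σ(j)`, else `0`); as `(σ, s)` ranges over all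
`(2n)!·2^{2n}` parameters this enumerates the group `B(2n)` of signed permutation
matrices exactly once. -/
def spMatrix {n : ℕ} (σ : Equiv.Perm (Fin (2 * n))) (s : Fin (2 * n) → Bool) :
    Matrix (Fin (2 * n)) (Fin (2 * n)) ℝ :=
  Matrix.of fun i j => if σ j = i then (if s j then 1 else -1) else 0

/-- For a uniformly random signed permutation matrix `Q ∈ B(2n)` and `k`-element
subsets `S₁, S₂, T₁, T₂`, the expectation `E[det(Q|_{S₁,T₁})·det(Q|_{S₂,T₂})]` equals
`C(2n,k)⁻¹` if `S₁ = S₂` and `T₁ = T₂`, and `0` otherwise. -/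
theorem expectation_minor_products_signedPerm (n k : ℕ) (hk1 : 1 ≤ k) (hk2 : k ≤ 2 * n)
    (S₁ S₂ T₁ T₂ : Finset (Fin (2 * n)))
    (hS₁ : S₁.card = k) (hS₂ : S₂.card = k) (hT₁ : T₁.card = k) (hT₂ : T₂.card = k) :
    (1 / ((2 ^ (2 * n) * (2 * n).factorial : ℕ) : ℝ)) *
        ∑ σ : Equiv.Perm (Fin (2 * n)), ∑ s : Fin (2 * n) → Bool,
          (Matrix.det (Matrix.of fun i j : Fin k =>
              spMatrix σ s ((S₁.orderIsoOfFin hS₁ i : Fin (2 * n)))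
                ((T₁.orderIsoOfFin hT₁ j : Fin (2 * n)))) *
            Matrix.det (Matrix.of fun i j : Fin k =>
              spMatrix σ s ((S₂.orderIsoOfFin hS₂ i : Fin (2 * n)))
                ((T₂.orderIsoOfFin hT₂ j : Fin (2 * n)))))
      = if S₁ = S₂ ∧ T₁ = T₂ then (((2 * n).choose k : ℕ) : ℝ)⁻¹ else 0 := by
  have minor_eq : ∀ (σ : Equiv.Perm (Fin (2 * n))) (s : Fin (2 * n) → Bool)
      (S T : Finset (Fin (2 * n))) (hS : S.card = k) (hT : T.card = k),
      Matrix.det (Matrix.of fun i j : Fin k =>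
        spMatrix σ s ((S.orderIsoOfFin hS i : Fin (2 * n)))
          ((T.orderIsoOfFin hT j : Fin (2 * n))))
      = (∏ t ∈ T, (if s t then (1:ℝ) else -1)) *
        Matrix.det (Matrix.of fun i j : Fin k =>
          if σ (T.orderIsoOfFin hT j) = S.orderIsoOfFin hS i then (1:ℝ) else 0) := by
    intro σ s S T hS hT
    have hmat : (Matrix.of fun i j : Fin k =>
        spMatrix σ s ((S.orderIsoOfFin hS i : Fin (2 * n)))
          ((T.orderIsoOfFin hT j : Fin (2 * n))))
        = Matrix.of (fun i j : Fin k =>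
            (if s ((T.orderIsoOfFin hT j : Fin (2 * n))) then (1:ℝ) else -1) *
            ((Matrix.of fun i j : Fin k =>
              if σ (T.orderIsoOfFin hT j) = S.orderIsoOfFin hS i then (1:ℝ) else 0) i j)) := by
      ext i j
      simp only [spMatrix, Matrix.of_apply]
      by_cases hc : σ ((T.orderIsoOfFin hT j : Fin (2 * n))) = (S.orderIsoOfFin hS i : Fin (2 * n)) <;>
        simp only [hc, ↓reduceIte, mul_one, mul_zero]
    rw [hmat, Matrix.det_mul_row]
    congr 1
    rw [← Finset.prod_coe_sort T (fun t => if s t then (1:ℝ) else -1)]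
    exact Equiv.prod_comp (T.orderIsoOfFin hT).toEquiv
      (fun t : {x // x ∈ T} => if s (t : Fin (2 * n)) then (1:ℝ) else -1)
  have inner_eq : ∀ σ : Equiv.Perm (Fin (2 * n)),
      (∑ s : Fin (2 * n) → Bool,
        (Matrix.det (Matrix.of fun i j : Fin k =>
            spMatrix σ s ((S₁.orderIsoOfFin hS₁ i : Fin (2 * n)))
              ((T₁.orderIsoOfFin hT₁ j : Fin (2 * n)))) *
          Matrix.det (Matrix.of fun i j : Fin k =>
            spMatrix σ s ((S₂.orderIsoOfFin hS₂ i : Fin (2 * n)))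
              ((T₂.orderIsoOfFin hT₂ j : Fin (2 * n))))))
      = (Matrix.det (Matrix.of fun i j : Fin k =>
            if σ (T₁.orderIsoOfFin hT₁ j) = S₁.orderIsoOfFin hS₁ i then (1:ℝ) else 0) *
         Matrix.det (Matrix.of fun i j : Fin k =>
            if σ (T₂.orderIsoOfFin hT₂ j) = S₂.orderIsoOfFin hS₂ i then (1:ℝ) else 0)) *
        (if T₁ = T₂ then (2:ℝ) ^ (2 * n) else 0) := by
    intro σ
    have : ∀ s : Fin (2 * n) → Bool,
        (Matrix.det (Matrix.of fun i j : Fin k =>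
            spMatrix σ s ((S₁.orderIsoOfFin hS₁ i : Fin (2 * n)))
              ((T₁.orderIsoOfFin hT₁ j : Fin (2 * n)))) *
          Matrix.det (Matrix.of fun i j : Fin k =>
            spMatrix σ s ((S₂.orderIsoOfFin hS₂ i : Fin (2 * n)))
              ((T₂.orderIsoOfFin hT₂ j : Fin (2 * n)))))
        = (Matrix.det (Matrix.of fun i j : Fin k =>
              if σ (T₁.orderIsoOfFin hT₁ j) = S₁.orderIsoOfFin hS₁ i then (1:ℝ) else 0) *
           Matrix.det (Matrix.of fun i j : Fin k =>
              if σ (T₂.orderIsoOfFin hT₂ j) = S₂.orderIsoOfFin hS₂ i then (1:ℝ) else 0)) *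
          ((∏ t ∈ T₁, (if s t then (1:ℝ) else -1)) *
            ∏ t ∈ T₂, (if s t then (1:ℝ) else -1)) := by
      intro s
      rw [minor_eq σ s S₁ T₁ hS₁ hT₁, minor_eq σ s S₂ T₂ hS₂ hT₂]
      ring
    simp only [this, ← Finset.mul_sum]
    congr 1
    rw [sum_sign_prod T₁ T₂, Fintype.card_fin]
  rw [Finset.sum_congr rfl (fun σ _ => inner_eq σ)]
  by_cases hT : T₁ = T₂
  · subst hT
    by_cases hS : S₁ = S₂
    · subst hS
      rw [if_pos (show S₁ = S₁ ∧ T₁ = T₁ from ⟨rfl, rfl⟩)]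
      have hterm : ∀ σ : Equiv.Perm (Fin (2 * n)),
          (Matrix.det (Matrix.of fun i j : Fin k =>
              if σ (T₁.orderIsoOfFin hT₁ j) = S₁.orderIsoOfFin hS₁ i then (1:ℝ) else 0) *
           Matrix.det (Matrix.of fun i j : Fin k =>
              if σ (T₁.orderIsoOfFin hT₂ j) = S₁.orderIsoOfFin hS₂ i then (1:ℝ) else 0)) *
            (if T₁ = T₁ then (2:ℝ) ^ (2 * n) else 0)
          = (2:ℝ) ^ (2 * n) * (if T₁.image σ = S₁ then (1:ℝ) else 0) := by
        intro σ
        rw [if_pos (rfl : T₁ = T₁)]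
        have hdd : (Matrix.of fun i j : Fin k =>
            if σ (T₁.orderIsoOfFin hT₂ j) = S₁.orderIsoOfFin hS₂ i then (1:ℝ) else 0)
            = (Matrix.of fun i j : Fin k =>
            if σ (T₁.orderIsoOfFin hT₁ j) = S₁.orderIsoOfFin hS₁ i then (1:ℝ) else 0) := rfl
        rw [hdd]
        by_cases him : T₁.image σ = S₁
        · rw [if_pos him, detB_sq σ S₁ T₁ hS₁ hT₁ him]
          ring
        · rw [if_neg him, detB_zero σ S₁ T₁ hS₁ hT₁ him]
          ring
      rw [Finset.sum_congr rfl (fun σ _ => hterm σ), ← Finset.mul_sum]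
      have hcount : (∑ σ : Equiv.Perm (Fin (2 * n)), (if T₁.image σ = S₁ then (1:ℝ) else 0))
          = ((k.factorial * (2 * n - k).factorial : ℕ) : ℝ) := by
        rw [Finset.sum_boole]
        congr 1
        rw [← Fintype.card_subtype]
        rw [card_perm_image S₁ T₁ (hS₁.trans hT₁.symm), hT₁, Fintype.card_fin]
      rw [hcount]
      have hfac : (2 * n).choose k * (k.factorial * (2 * n - k).factorial) = (2 * n).factorial := by
        rw [← Nat.choose_mul_factorial_mul_factorial hk2]
        ring
      have h2 : ((2:ℝ) ^ (2 * n)) ≠ 0 := by positivity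
      have h3 : (((2 * n).factorial : ℕ) : ℝ) ≠ 0 := by
        exact_mod_cast Nat.factorial_ne_zero _
      have h4 : (((2 * n).choose k : ℕ) : ℝ) ≠ 0 := by
        exact_mod_cast (Nat.choose_pos hk2).ne'
      push_cast
      field_simp
      rw [← hfac]
      push_cast
      ring
    · have hz : (∑ σ : Equiv.Perm (Fin (2 * n)),
          ((Matrix.det (Matrix.of fun i j : Fin k =>
              if σ (T₁.orderIsoOfFin hT₁ j) = S₁.orderIsoOfFin hS₁ i then (1:ℝ) else 0) *
           Matrix.det (Matrix.of fun i j : Fin k =>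
              if σ (T₁.orderIsoOfFin hT₂ j) = S₂.orderIsoOfFin hS₂ i then (1:ℝ) else 0)) *
            (if T₁ = T₁ then (2:ℝ) ^ (2 * n) else 0))) = 0 := by
        apply Finset.sum_eq_zero
        intro σ _
        by_cases him : T₁.image σ = S₁
        · have him2 : T₁.image σ ≠ S₂ := fun hc => hS (him.symm.trans hc)
          rw [detB_zero σ S₂ T₁ hS₂ hT₂ him2]
          ring
        · rw [detB_zero σ S₁ T₁ hS₁ hT₁ him]
          ring
      rw [hz, mul_zero, if_neg (fun hc : S₁ = S₂ ∧ T₁ = T₁ => hS hc.1)]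
  · have hz : (∑ σ : Equiv.Perm (Fin (2 * n)),
        ((Matrix.det (Matrix.of fun i j : Fin k =>
            if σ (T₁.orderIsoOfFin hT₁ j) = S₁.orderIsoOfFin hS₁ i then (1:ℝ) else 0) *
         Matrix.det (Matrix.of fun i j : Fin k =>
            if σ (T₂.orderIsoOfFin hT₂ j) = S₂.orderIsoOfFin hS₂ i then (1:ℝ) else 0)) *
          (if T₁ = T₂ then (2:ℝ) ^ (2 * n) else 0))) = 0 := by
      apply Finset.sum_eq_zero
      intro σ _
      rw [if_neg hT, mul_zero]
    rw [hz, mul_zero, if_neg (fun hc : S₁ = S₂ ∧ T₁ = T₂ => hT hc.2)]
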